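/- With ψ the relativised collapsing function: if ξ is a limit ordinal, then ψ(ξ) = sup_{η < ξ} ψ(η). -/

import Mathlib

open Ordinal hiding veblen veblen_zero veblen_of_ne_zero isNormal_veblen veblen_pos mk_Iio_ordinal
open Cardinal

set_option linter.deprecated false

/-- The binary Veblen function: `veblen 0 β = ω ^ β`, and for `α > 0`,
`veblen α` enumerates the common fixed points of `veblen γ` for `γ < α`. -/
noncomputable def veblen : Ordinal → Ordinal → Ordinal :=
  WellFounded.fix Ordinal.lt_wf
    (fun α ih => if α = 0 then fun β => omega0 ^ β
      else (derivFamily (familyOfBFamily α (fun ξ h => ih ξ h)) : Ordinal.{0} → Ordinal.{0}))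

theorem veblen_def (a : Ordinal) :
    veblen a = if a = 0 then (fun β => omega0 ^ β)
      else (derivFamily (familyOfBFamily a (fun ξ _ => veblen ξ)) : Ordinal.{0} → Ordinal.{0}) :=
  WellFounded.fix_eq _ _ _

theorem veblen_zero (b : Ordinal) : veblen 0 b = omega0 ^ b := by
  rw [veblen_def]; simp

theorem veblen_of_ne_zero {a : Ordinal} (h : a ≠ 0) :
    veblen a = derivFamily (familyOfBFamily a (fun ξ _ => veblen ξ)) := by
  rw [veblen_def, if_neg h]

theorem isNormal_veblen (a : Ordinal.{0}) : Order.IsNormal (veblen a) := by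
  rcases eq_or_ne a 0 with rfl | h
  · rw [veblen_def]; simpa using isNormal_opow one_lt_omega0
  · rw [veblen_of_ne_zero h]; exact isNormal_derivFamily _

theorem veblen_fp {c a : Ordinal.{0}} (h : c < a) (b : Ordinal) :
    veblen c (veblen a b) = veblen a b := by
  have ha : a ≠ 0 := by rintro rfl; exact absurd h (by simp)
  rw [veblen_of_ne_zero ha]
  have := derivFamily_fp (f := familyOfBFamily a (fun ξ _ => veblen ξ))
    (i := enum (α := a.ToType) (· < ·) ⟨c, h.trans_eq (type_toType _).symm⟩) ?_ b
  · rwa [familyOfBFamily_enum a _ c h] at this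
  · rw [familyOfBFamily_enum a _ c h]; exact isNormal_veblen c

theorem exists_veblen_eq {a z : Ordinal.{0}} (ha : a ≠ 0) (h : ∀ c < a, veblen c z = z) :
    ∃ b, veblen a b = z := by
  rw [veblen_of_ne_zero ha]
  exact (fp_iff_derivFamily (fun i => isNormal_veblen _)).1 (fun i => h _ (typein_lt_self i))

theorem le_veblen_right (a b : Ordinal.{0}) : b ≤ veblen a b :=
  (isNormal_veblen a).strictMono.le_apply

theorem veblen_pos (a b : Ordinal.{0}) : 0 < veblen a b := by
  rcases eq_or_ne a 0 with rfl | h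
  · rw [veblen_zero]; exact opow_pos b omega0_pos
  · have h0 : veblen 0 (veblen a b) = veblen a b := veblen_fp (pos_iff_ne_zero.2 h) b
    rw [← h0, veblen_zero]; exact opow_pos _ omega0_pos

theorem le_veblen_left (a : Ordinal.{0}) : ∀ b, a ≤ veblen a b := by
  induction a using Ordinal.induction with
  | h a IH =>
    intro b
    by_contra hlt
    push_neg at hlt
    have hc : veblen a b < a := hlt
    have h1 : veblen a b ≤ veblen (veblen a b) 0 := IH _ hc 0
    have h2 : veblen (veblen a b) 0 < veblen (veblen a b) (veblen a b) :=
      (isNormal_veblen _).strictMono (veblen_pos a b)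
    rw [veblen_fp hc] at h2
    exact absurd (h1.trans_lt h2) (lt_irrefl _)

/-- The set of strongly critical ordinals. -/
def StronglyCritical (γ : Ordinal) : Prop := veblen γ 0 = γ

theorem SC_pos {γ : Ordinal} (h : StronglyCritical γ) : 0 < γ := h ▸ veblen_pos γ 0

theorem SC_fp {γ c : Ordinal} (h : StronglyCritical γ) (hc : c < γ) : veblen c γ = γ := by
  conv_lhs => rw [← h]
  rw [veblen_fp hc, h]

theorem SC_veblen_lt {γ x y : Ordinal} (h : StronglyCritical γ)
    (hx : x < γ) (hy : y < γ) : veblen x y < γ := by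
  calc veblen x y < veblen x γ := (isNormal_veblen x).strictMono hy
  _ = γ := SC_fp h hx

theorem strictMono_veblen_left : StrictMono (fun a : Ordinal.{0} => veblen a 0) := by
  intro a a' h
  have h1 : 0 < veblen a' 0 := veblen_pos a' 0
  have := (isNormal_veblen a).strictMono h1
  rwa [veblen_fp h 0] at this

theorem veblen_limit_le {l z : Ordinal.{0}} (hl : Order.IsSuccLimit l)
    (hz : ∀ c < l, veblen c z ≤ z) : veblen l 0 ≤ z := by
  rw [veblen_of_ne_zero hl.pos.ne', derivFamily_zero]
  refine nfpFamily_le_fp (f := familyOfBFamily l (fun ξ _ => veblen ξ))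
    (fun i => (isNormal_veblen (typein (α := l.ToType) (· < ·) i)).strictMono.monotone) (zero_le (a := z))
    (fun i => ?_)
  exact hz _ (typein_lt_self i)

theorem isNormal_veblen_left : Order.IsNormal (fun a : Ordinal.{0} => veblen a 0) := by
  rw [Order.isNormal_iff]
  refine ⟨strictMono_veblen_left, fun l hl a ha => ?_⟩
  set z : Ordinal := sSup ((fun a => veblen a 0) '' Set.Iio l) with hzdef
  have hne : ((fun a => veblen a 0) '' Set.Iio l).Nonempty :=
    ⟨veblen 0 0, ⟨0, hl.pos, rfl⟩⟩
  have hbdd : BddAbove ((fun a => veblen a 0) '' Set.Iio l) := by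
    refine ⟨veblen l 0, ?_⟩
    rintro _ ⟨b, hb, rfl⟩
    exact strictMono_veblen_left.monotone hb.le
  have hkey : ∀ c < l, veblen c z ≤ z := by
    intro c hc
    rw [hzdef, (isNormal_veblen c).map_sSup hne hbdd]
    refine csSup_le (hne.image _) ?_
    rintro _ ⟨_, ⟨b, hb, rfl⟩, rfl⟩
    have hm1 : b ≤ max b (c + 1) := le_max_left _ _
    have hm2 : c < max b (c + 1) := (Order.lt_succ c).trans_le (by
      rw [← add_one_eq_succ]; exact le_max_right _ _)
    have hmlt : max b (c + 1) < l := max_lt hb (hl.succ_lt hc)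
    calc veblen c (veblen b 0)
        ≤ veblen c (veblen (max b (c + 1)) 0) :=
          (isNormal_veblen c).strictMono.monotone
            (strictMono_veblen_left.monotone hm1)
      _ = veblen (max b (c + 1)) 0 := veblen_fp hm2 0
      _ ≤ z := le_csSup hbdd ⟨_, hmlt, rfl⟩
  have h1 : veblen l 0 ≤ z := veblen_limit_le hl hkey
  refine h1.trans (csSup_le hne ?_)
  rintro _ ⟨b, hb, rfl⟩
  exact ha b hb

theorem SC_unbounded : ¬ BddAbove {γ | StronglyCritical γ} := by
  rintro ⟨b, hb⟩
  set γ := nfp (fun a => veblen a 0) (b + 1) with hγ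
  have h1 : StronglyCritical γ := nfp_fp isNormal_veblen_left (b + 1)
  have h2 : b + 1 ≤ γ := le_nfp _ _
  have := hb h1
  exact absurd ((Order.lt_succ b).trans_le (by rwa [← add_one_eq_succ])) (not_lt.2 this)

/-- `Gamma β` is the `β`-th strongly critical ordinal. -/
noncomputable def Gamma : Ordinal → Ordinal :=
  enumOrd {γ | StronglyCritical γ}

theorem Gamma_SC (β : Ordinal) : StronglyCritical (Gamma β) :=
  enumOrd_mem SC_unbounded β

theorem SC_le_Gamma {γ β : Ordinal} (h : StronglyCritical γ) (hle : γ ≤ Gamma β) :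
    ∃ β' ≤ β, Gamma β' = γ := by
  obtain ⟨β', hβ'⟩ := enumOrd_surjective SC_unbounded h
  refine ⟨β', ?_, hβ'⟩
  by_contra hgt
  push_neg at hgt
  have := enumOrd_strictMono SC_unbounded hgt
  rw [hβ'] at this
  exact absurd (this.trans_le hle) (lt_irrefl _)

/-- Veblen normal form generation: every ordinal is generated from `0` and the
strongly critical ordinals below it by `+` and `veblen`. -/
theorem gen_mem (S : Set Ordinal) (h0 : (0 : Ordinal) ∈ S)
    (hadd : ∀ x ∈ S, ∀ y ∈ S, x + y ∈ S)
    (hveb : ∀ x ∈ S, ∀ y ∈ S, veblen x y ∈ S) :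
    ∀ δ, (∀ γ, StronglyCritical γ → γ ≤ δ → γ ∈ S) → δ ∈ S := by
  intro δ
  induction δ using Ordinal.induction with
  | h δ IH =>
    intro hγ
    rcases eq_or_ne δ 0 with rfl | hδ0
    · exact h0
    by_cases hsc : StronglyCritical δ
    · exact hγ δ hsc le_rfl
    by_cases hpr : ∀ a < δ, a + δ = δ
    · -- additively principal: δ = ω ^ e
      have hpow := Ordinal.principal_add_iff_zero_or_omega0_opow.1
        (Ordinal.principal_add_iff_add_left_eq_self.2 hpr)
      rcases hpow with rfl | ⟨e, he0⟩
      · exact h0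
      have he : omega0 ^ e = δ := he0
      have hele : e ≤ δ := he ▸ Ordinal.right_le_opow e one_lt_omega0
      rcases lt_or_eq_of_le hele with helt | heq
      · -- δ = veblen 0 e
        have : veblen 0 e = δ := by rw [veblen_zero, he]
        rw [← this]
        exact hveb 0 h0 e (IH e helt (fun γ hγ' hle => hγ γ hγ' (hle.trans helt.le)))
      · -- δ is an ε-number: find the Veblen level
        have hfix0 : veblen 0 δ = δ := by rw [veblen_zero, ← heq]; exact he.trans heq.symm
        have hAne : {a | veblen a δ ≠ δ}.Nonempty := by
          by_contra hA
          rw [Set.not_nonempty_iff_eq_empty] at hA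
          have hall : ∀ a, veblen a δ = δ := by
            intro a
            by_contra hne'
            exact absurd (Set.eq_empty_iff_forall_notMem.1 hA a) (fun h => h hne')
          obtain ⟨b, hb⟩ := exists_veblen_eq hδ0 (fun c _ => hall c)
          exact hsc (le_antisymm (by
            calc veblen δ 0 ≤ veblen δ b := (isNormal_veblen δ).strictMono.monotone (zero_le (a := b))
            _ = δ := hb) (le_veblen_left δ 0))
        set a' := sInf {a | veblen a δ ≠ δ} with ha'def
        have ha'mem : veblen a' δ ≠ δ := csInf_mem hAne
        have ha'min : ∀ c < a', veblen c δ = δ := by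
          intro c hc
          by_contra hne'
          exact absurd (csInf_le' (s := {a | veblen a δ ≠ δ}) hne') (not_le.2 hc)
        have ha'0 : a' ≠ 0 := fun h => ha'mem (h ▸ hfix0)
        obtain ⟨b, hb⟩ := exists_veblen_eq ha'0 ha'min
        have hblt : b < δ := by
          by_contra hble
          push_neg at hble
          have : veblen a' δ ≤ veblen a' b := (isNormal_veblen a').strictMono.monotone hble
          rw [hb] at this
          exact ha'mem (le_antisymm this (le_veblen_right a' δ))
        have ha'lt : a' < δ := by
          by_contra ha'le
          push_neg at ha'le
          obtain ⟨b', hb'⟩ := exists_veblen_eq hδ0 (fun c hc => ha'min c (hc.trans_le ha'le))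
          exact hsc (le_antisymm (by
            calc veblen δ 0 ≤ veblen δ b' := (isNormal_veblen δ).strictMono.monotone (zero_le (a := b'))
            _ = δ := hb') (le_veblen_left δ 0))
        rw [← hb]
        exact hveb a' (IH a' ha'lt (fun γ hγ' hle => hγ γ hγ' (hle.trans ha'lt.le)))
          b (IH b hblt (fun γ hγ' hle => hγ γ hγ' (hle.trans hblt.le)))
    · -- not principal: split as a sum
      push_neg at hpr
      obtain ⟨a, ha, hne⟩ := hpr
      have hab : a + (δ - a) = δ := Ordinal.add_sub_cancel_of_le ha.le
      have hb : δ - a < δ := by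
        rcases lt_or_eq_of_le (Ordinal.sub_le_self δ a) with h | h
        · exact h
        · rw [h] at hab; exact absurd hab hne
      have haS : a ∈ S := IH a ha (fun γ hγ' hle => hγ γ hγ' (hle.trans ha.le))
      have hbS : δ - a ∈ S := IH _ hb (fun γ hγ' hle => hγ γ hγ' (hle.trans hb.le))
      rw [← hab]
      exact hadd a haS _ hbS

/-- The least uncountable cardinal (as an ordinal) greater than `θ`. -/
noncomputable def OmegaB (θ : Ordinal) : Ordinal :=
  sInf {o | θ < o ∧ o.card.ord = o ∧ Cardinal.aleph0 < o.card}

theorem OmegaB_mem (θ : Ordinal) :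
    OmegaB θ ∈ {o : Ordinal | θ < o ∧ o.card.ord = o ∧ Cardinal.aleph0 < o.card} := by
  refine csInf_mem ⟨(Order.succ (Cardinal.aleph0 ⊔ θ.card)).ord, ?_, ?_, ?_⟩
  · exact Cardinal.lt_ord.2 (le_sup_right.trans_lt (Order.lt_succ _))
  · rw [Cardinal.card_ord]
  · rw [Cardinal.card_ord]; exact le_sup_left.trans_lt (Order.lt_succ _)

theorem lt_OmegaB (θ : Ordinal) : θ < OmegaB θ := (OmegaB_mem θ).1

theorem aleph0_lt_card_OmegaB (θ : Ordinal) : Cardinal.aleph0 < (OmegaB θ).card :=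
  (OmegaB_mem θ).2.2

theorem card_succ_theta_lt (θ : Ordinal) : (θ + 1).card < (OmegaB θ).card := by
  have h1 : θ + 1 ≤ OmegaB θ := by
    rw [add_one_eq_succ]; exact Order.succ_le_of_lt (lt_OmegaB θ)
  rcases lt_or_eq_of_le (card_le_card h1) with h | h
  · exact h
  · exfalso
    have hord : OmegaB θ = (θ + 1).card.ord := by rw [h, (OmegaB_mem θ).2.1]
    have hΩle : OmegaB θ ≤ θ + 1 := hord.le.trans (Cardinal.ord_card_le _)
    have hΩeq : OmegaB θ = θ + 1 := le_antisymm hΩle h1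
    have hinf : Cardinal.aleph0 ≤ θ.card := by
      by_contra hfin
      push_neg at hfin
      have : (θ + 1).card < Cardinal.aleph0 := by
        rw [add_one_eq_succ, card_succ]
        exact Cardinal.add_lt_aleph0 hfin Cardinal.one_lt_aleph0
      exact absurd ((aleph0_lt_card_OmegaB θ).trans_le (by rw [hΩeq])) (not_lt.2 this.le)
    have hcard : (θ + 1).card = θ.card := by
      rw [add_one_eq_succ, card_succ, Cardinal.add_one_eq hinf]
    have : OmegaB θ ≤ θ := by
      rw [hord, hcard]; exact Cardinal.ord_card_le θ
    exact absurd (lt_OmegaB θ) (not_lt.2 this)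

/-- Closure of `{0, Ω} ∪ {Γ_β : β ≤ θ}` under `+`, `veblen` and the
given partial collapsing function `f` on arguments below `α`. -/
def closB (θ α : Ordinal) (f : ∀ ξ, ξ < α → Ordinal) : Set Ordinal :=
  ⋂₀ {S : Set Ordinal |
      0 ∈ S ∧ OmegaB θ ∈ S ∧ (∀ β ≤ θ, Gamma β ∈ S) ∧
      (∀ x ∈ S, ∀ y ∈ S, x + y ∈ S) ∧
      (∀ x ∈ S, ∀ y ∈ S, veblen x y ∈ S) ∧
      (∀ ξ (h : ξ < α), ξ ∈ S → f ξ h ∈ S)}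

/-- The closure condition defining `closB`. -/
def Bcond (θ α : Ordinal) (f : ∀ ξ, ξ < α → Ordinal) (S : Set Ordinal) : Prop :=
  0 ∈ S ∧ OmegaB θ ∈ S ∧ (∀ β ≤ θ, Gamma β ∈ S) ∧
  (∀ x ∈ S, ∀ y ∈ S, x + y ∈ S) ∧
  (∀ x ∈ S, ∀ y ∈ S, veblen x y ∈ S) ∧
  (∀ ξ (h : ξ < α), ξ ∈ S → f ξ h ∈ S)

theorem closB_eq (θ α : Ordinal) (f : ∀ ξ, ξ < α → Ordinal) :
    closB θ α f = ⋂₀ {S | Bcond θ α f S} := rfl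

theorem closB_subset {θ α : Ordinal} {f : ∀ ξ, ξ < α → Ordinal} {S : Set Ordinal}
    (hS : Bcond θ α f S) : closB θ α f ⊆ S :=
  Set.sInter_subset_of_mem hS

theorem Bcond_closB (θ α : Ordinal) (f : ∀ ξ, ξ < α → Ordinal) :
    Bcond θ α f (closB θ α f) := by
  refine ⟨?_, ?_, ?_, ?_, ?_, ?_⟩
  · exact fun S hS => hS.1
  · exact fun S hS => hS.2.1
  · exact fun β hβ S hS => hS.2.2.1 β hβ
  · exact fun x hx y hy S hS => hS.2.2.2.1 x (hx S hS) y (hy S hS)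
  · exact fun x hx y hy S hS => hS.2.2.2.2.1 x (hx S hS) y (hy S hS)
  · exact fun ξ h hξ S hS => hS.2.2.2.2.2 ξ h (hξ S hS)

/-- The relativised collapsing function `ψ_θ`. -/
noncomputable def psiB (θ : Ordinal) : Ordinal → Ordinal :=
  WellFounded.fix Ordinal.lt_wf
    (fun α ih => sInf {β | β ∉ closB θ α (fun ξ h => ih ξ h)})

/-- The relativised collapsing hierarchy `B_θ(α)`. -/
def BB (θ α : Ordinal) : Set Ordinal :=
  closB θ α (fun ξ _ => psiB θ ξ)

theorem psiB_def (θ α : Ordinal) : psiB θ α = sInf {β | β ∉ BB θ α} :=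
  WellFounded.fix_eq _ _ _

theorem BB_mono {θ α α' : Ordinal} (h : α ≤ α') : BB θ α ⊆ BB θ α' := by
  intro x hx
  intro S hS
  refine hx S ⟨hS.1, hS.2.1, hS.2.2.1, hS.2.2.2.1, hS.2.2.2.2.1, ?_⟩
  exact fun ξ hξ hmem => hS.2.2.2.2.2 ξ (hξ.trans_le h) hmem

/-- Finite stages of the "master" closure, allowing `psiB θ` at all arguments. -/
noncomputable def lay (θ : Ordinal) : ℕ → Set Ordinal
  | 0 => {0, OmegaB θ} ∪ Gamma '' Set.Iic θ
  | n + 1 => lay θ n ∪ Set.image2 (· + ·) (lay θ n) (lay θ n) ∪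
      Set.image2 veblen (lay θ n) (lay θ n) ∪ psiB θ '' lay θ n

noncomputable def CC (θ : Ordinal) : Set Ordinal := ⋃ n, lay θ n

theorem lay_subset_succ (θ : Ordinal) (n : ℕ) : lay θ n ⊆ lay θ (n + 1) := fun x hx =>
  Set.mem_union_left _ (Set.mem_union_left _ (Set.mem_union_left _ hx))

theorem lay_mono (θ : Ordinal) {m n : ℕ} (h : m ≤ n) : lay θ m ⊆ lay θ n := by
  induction n with
  | zero => rw [Nat.le_zero.1 h]
  | succ n IH =>
    rcases Nat.le_succ_iff.1 h with h' | h'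
    · exact (IH h').trans (lay_subset_succ θ n)
    · rw [h']

theorem Bcond_CC (θ α : Ordinal) : Bcond θ α (fun ξ _ => psiB θ ξ) (CC θ) := by
  have hmem : ∀ n, ∀ x ∈ lay θ n, x ∈ CC θ := fun n x hx => Set.mem_iUnion.2 ⟨n, hx⟩
  have hpair : ∀ x ∈ CC θ, ∀ y ∈ CC θ, ∃ n, x ∈ lay θ n ∧ y ∈ lay θ n := by
    intro x hx y hy
    obtain ⟨m, hm⟩ := Set.mem_iUnion.1 hx
    obtain ⟨n, hn⟩ := Set.mem_iUnion.1 hy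
    exact ⟨max m n, lay_mono θ (le_max_left _ _) hm, lay_mono θ (le_max_right _ _) hn⟩
  refine ⟨?_, ?_, ?_, ?_, ?_, ?_⟩
  · exact hmem 0 0 (Set.mem_union_left _ (Set.mem_insert _ _))
  · exact hmem 0 _ (Set.mem_union_left _ (Set.mem_insert_of_mem _ rfl))
  · exact fun β hβ => hmem 0 _ (Set.mem_union_right _ ⟨β, hβ, rfl⟩)
  · intro x hx y hy
    obtain ⟨n, hxn, hyn⟩ := hpair x hx y hy
    exact hmem (n + 1) _ (Set.mem_union_left _ (Set.mem_union_left _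
      (Set.mem_union_right _ (Set.mem_image2_of_mem hxn hyn))))
  · intro x hx y hy
    obtain ⟨n, hxn, hyn⟩ := hpair x hx y hy
    exact hmem (n + 1) _ (Set.mem_union_left _
      (Set.mem_union_right _ (Set.mem_image2_of_mem hxn hyn)))
  · intro ξ h hξ
    obtain ⟨n, hn⟩ := Set.mem_iUnion.1 hξ
    exact hmem (n + 1) _ (Set.mem_union_right _ ⟨ξ, hn, rfl⟩)

theorem BB_subset_CC (θ α : Ordinal) : BB θ α ⊆ CC θ :=
  closB_subset (Bcond_CC θ α)

theorem mk_lay_le (θ : Ordinal) (n : ℕ) :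
    #(lay θ n) ≤ Cardinal.lift.{1} (Cardinal.aleph0 ⊔ (θ + 1).card) := by
  set L := Cardinal.lift.{1} (Cardinal.aleph0 ⊔ (θ + 1).card) with hL
  have hLinf : Cardinal.aleph0 ≤ L := by
    rw [hL, Cardinal.aleph0_le_lift]
    exact le_sup_left
  induction n with
  | zero =>
    show #(({0, OmegaB θ} ∪ Gamma '' Set.Iic θ : Set Ordinal) : Type 1) ≤ L
    refine (Cardinal.mk_union_le _ _).trans ?_
    refine Cardinal.add_le_of_le hLinf ?_ ?_
    · refine le_trans (le_of_lt ((Set.toFinite _).lt_aleph0)) hLinf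
    · refine (Cardinal.mk_image_le).trans ?_
      have : (Set.Iic θ : Set Ordinal) = Set.Iio (θ + 1) := by
        rw [add_one_eq_succ, Order.Iio_succ]
      rw [this, mk_Iio_ordinal]
      exact Cardinal.lift_le.2 le_sup_right
  | succ n IH =>
    show #((lay θ n ∪ Set.image2 (· + ·) (lay θ n) (lay θ n) ∪
      Set.image2 veblen (lay θ n) (lay θ n) ∪ psiB θ '' lay θ n : Set Ordinal) : Type 1) ≤ L
    have hmul : ∀ f : Ordinal → Ordinal → Ordinal,
        #(Set.image2 f (lay θ n) (lay θ n)) ≤ L := by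
      intro f
      refine (Cardinal.mk_image2_le).trans ?_
      calc #(lay θ n) * #(lay θ n) ≤ L * L := mul_le_mul' IH IH
      _ = L := Cardinal.mul_eq_self hLinf
    refine (Cardinal.mk_union_le _ _).trans ?_
    refine Cardinal.add_le_of_le hLinf ?_ ((Cardinal.mk_image_le).trans IH)
    refine (Cardinal.mk_union_le _ _).trans ?_
    refine Cardinal.add_le_of_le hLinf ?_ (hmul _)
    refine (Cardinal.mk_union_le _ _).trans ?_
    exact Cardinal.add_le_of_le hLinf IH (hmul _)

theorem mk_CC_le (θ : Ordinal) :
    #(CC θ) ≤ Cardinal.lift.{1} (Cardinal.aleph0 ⊔ (θ + 1).card) := by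
  set L := Cardinal.lift.{1} (Cardinal.aleph0 ⊔ (θ + 1).card) with hL
  have hLinf : Cardinal.aleph0 ≤ L := by
    rw [hL, Cardinal.aleph0_le_lift]
    exact le_sup_left
  have h0 := Cardinal.mk_iUnion_le_lift (fun n => lay θ n)
  rw [Cardinal.lift_id'] at h0
  refine h0.trans ?_
  have h1 : Cardinal.lift.{1} #ℕ = Cardinal.aleph0 := by
    simp
  have h2 : (⨆ n : ℕ, Cardinal.lift.{0} #(lay θ n)) ≤ L := by
    refine ciSup_le' (fun n => ?_)
    rw [Cardinal.lift_id']
    exact mk_lay_le θ n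
  calc Cardinal.lift.{1} #ℕ * (⨆ n : ℕ, Cardinal.lift.{0} #(lay θ n))
      ≤ Cardinal.aleph0 * L := by rw [h1]; exact mul_le_mul' le_rfl h2
    _ ≤ L * L := mul_le_mul' hLinf le_rfl
    _ = L := Cardinal.mul_eq_self hLinf

theorem exists_lt_OmegaB_not_mem_CC (θ : Ordinal) :
    ∃ β < OmegaB θ, β ∉ CC θ := by
  by_contra h
  push_neg at h
  have hsub : Set.Iio (OmegaB θ) ⊆ CC θ := fun β hβ => h β hβ
  have hle : Cardinal.lift.{1} (OmegaB θ).card ≤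
      Cardinal.lift.{1} (Cardinal.aleph0 ⊔ (θ + 1).card) := by
    rw [← mk_Iio_ordinal]
    exact (Cardinal.mk_le_mk_of_subset hsub).trans (mk_CC_le θ)
  rw [Cardinal.lift_le] at hle
  have hlt : Cardinal.aleph0 ⊔ (θ + 1).card < (OmegaB θ).card :=
    sup_lt_iff.2 ⟨aleph0_lt_card_OmegaB θ, card_succ_theta_lt θ⟩
  exact absurd (hle.trans_lt hlt) (lt_irrefl _)

theorem compl_BB_nonempty (θ α : Ordinal) : {β | β ∉ BB θ α}.Nonempty := by
  obtain ⟨β, _, hβ⟩ := exists_lt_OmegaB_not_mem_CC θ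
  exact ⟨β, fun h => hβ (BB_subset_CC θ α h)⟩

theorem psiB_not_mem (θ α : Ordinal) : psiB θ α ∉ BB θ α := by
  rw [psiB_def]
  exact csInf_mem (compl_BB_nonempty θ α)

theorem psiB_lt_OmegaB (θ α : Ordinal) : psiB θ α < OmegaB θ := by
  obtain ⟨β, hβΩ, hβ⟩ := exists_lt_OmegaB_not_mem_CC θ
  have : psiB θ α ≤ β := by
    rw [psiB_def]
    exact csInf_le' (fun h => hβ (BB_subset_CC θ α h))
  exact this.trans_lt hβΩ

theorem mem_BB_of_lt_psiB {θ α δ : Ordinal} (h : δ < psiB θ α) : δ ∈ BB θ α := by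
  by_contra hδ
  rw [psiB_def] at h
  exact absurd (csInf_le' (s := {β | β ∉ BB θ α}) hδ) (not_le.2 h)

theorem psiB_mono {θ α α' : Ordinal} (h : α ≤ α') : psiB θ α ≤ psiB θ α' := by
  conv_lhs => rw [psiB_def]
  exact csInf_le' (fun hmem => psiB_not_mem θ α' (BB_mono h hmem))

theorem Bcond_BB (θ α : Ordinal) : Bcond θ α (fun ξ _ => psiB θ ξ) (BB θ α) :=
  Bcond_closB θ α _

/-- At a limit, `BB` is the union of the earlier stages. -/
theorem BB_limit_subset {θ ξ : Ordinal} (hξ : Order.IsSuccLimit ξ) :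
    BB θ ξ ⊆ {x | ∃ η < ξ, x ∈ BB θ η} := by
  refine closB_subset ⟨?_, ?_, ?_, ?_, ?_, ?_⟩
  · exact ⟨0, hξ.pos, (Bcond_BB θ 0).1⟩
  · exact ⟨0, hξ.pos, (Bcond_BB θ 0).2.1⟩
  · exact fun β hβ => ⟨0, hξ.pos, (Bcond_BB θ 0).2.2.1 β hβ⟩
  · rintro x ⟨η₁, hη₁, hx⟩ y ⟨η₂, hη₂, hy⟩
    refine ⟨max η₁ η₂, max_lt hη₁ hη₂, ?_⟩
    exact (Bcond_BB θ _).2.2.2.1 x (BB_mono (le_max_left _ _) hx)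
      y (BB_mono (le_max_right _ _) hy)
  · rintro x ⟨η₁, hη₁, hx⟩ y ⟨η₂, hη₂, hy⟩
    refine ⟨max η₁ η₂, max_lt hη₁ hη₂, ?_⟩
    exact (Bcond_BB θ _).2.2.2.2.1 x (BB_mono (le_max_left _ _) hx)
      y (BB_mono (le_max_right _ _) hy)
  · rintro ζ hζ ⟨η, hη, hmem⟩
    refine ⟨max η (ζ + 1), max_lt hη (hξ.succ_lt hζ), ?_⟩
    have hζlt : ζ < max η (ζ + 1) := (Order.lt_succ ζ).trans_le (by
      rw [← add_one_eq_succ]; exact le_max_right _ _)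
    exact (Bcond_BB θ _).2.2.2.2.2 ζ hζlt (BB_mono (le_max_left _ _) hmem)

/-- Downward closure: members of `BB θ η` below `Ω` have all their predecessors in `BB θ η`. -/
theorem BB_downward {θ η : Ordinal} :
    ∀ x ∈ BB θ η, x < OmegaB θ → Set.Iic x ⊆ BB θ η := by
  have hBB := Bcond_BB θ η
  have hgen : ∀ δ, (∀ γ, StronglyCritical γ → γ ≤ δ → γ ∈ BB θ η) → δ ∈ BB θ η :=
    gen_mem _ hBB.1 hBB.2.2.2.1 hBB.2.2.2.2.1
  have key : BB θ η ⊆ {x | x ∈ BB θ η ∧ (x < OmegaB θ → Set.Iic x ⊆ BB θ η)} := by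
    refine closB_subset ⟨?_, ?_, ?_, ?_, ?_, ?_⟩
    · refine ⟨hBB.1, fun _ δ hδ => ?_⟩
      rw [Set.mem_Iic, nonpos_iff_eq_zero] at hδ
      rw [hδ]; exact hBB.1
    · exact ⟨hBB.2.1, fun h => absurd h (lt_irrefl _)⟩
    · intro β hβ
      refine ⟨hBB.2.2.1 β hβ, fun _ δ hδ => ?_⟩
      refine hgen δ (fun γ hγ hγδ => ?_)
      obtain ⟨β', hβ', hβ'eq⟩ := SC_le_Gamma hγ (hγδ.trans hδ)
      exact hβ'eq ▸ hBB.2.2.1 β' (hβ'.trans hβ)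
    · rintro x ⟨hx, hxd⟩ y ⟨hy, hyd⟩
      refine ⟨hBB.2.2.2.1 x hx y hy, fun hlt δ hδ => ?_⟩
      have hxΩ : x < OmegaB θ := (le_self_add (a := x) (b := y)).trans_lt hlt
      have hyΩ : y < OmegaB θ := (le_add_self (a := y) (b := x)).trans_lt hlt
      rcases le_or_gt δ x with h | h
      · exact hxd hxΩ h
      · have hsum : x + (δ - x) = δ := Ordinal.add_sub_cancel_of_le h.le
        have hsub : δ - x ≤ y := by
          have : x + (δ - x) ≤ x + y := by rw [hsum]; exact hδ
          exact (add_le_add_iff_left x).1 this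
        rw [← hsum]
        exact hBB.2.2.2.1 x hx _ (hyd hyΩ hsub)
    · rintro x ⟨hx, hxd⟩ y ⟨hy, hyd⟩
      refine ⟨hBB.2.2.2.2.1 x hx y hy, fun hlt δ hδ => ?_⟩
      have hxΩ : x < OmegaB θ := (le_veblen_left x y).trans_lt hlt
      have hyΩ : y < OmegaB θ := (le_veblen_right x y).trans_lt hlt
      rcases eq_or_lt_of_le (Set.mem_Iic.1 hδ) with rfl | hδlt
      · exact hBB.2.2.2.2.1 x hx y hy
      refine hgen δ (fun γ hγ hγδ => ?_)
      rcases le_or_gt γ x with h | h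
      · exact hxd hxΩ h
      rcases le_or_gt γ y with h' | h'
      · exact hyd hyΩ h'
      · exact absurd ((hγδ.trans_lt hδlt).trans (SC_veblen_lt hγ h h'))
          (lt_irrefl γ)
    · rintro ζ hζ ⟨hζmem, -⟩
      refine ⟨hBB.2.2.2.2.2 ζ hζ hζmem, fun _ δ hδ => ?_⟩
      have hδ' : δ ≤ psiB θ ζ := hδ
      rcases eq_or_lt_of_le hδ' with rfl | hδlt
      · exact hBB.2.2.2.2.2 ζ hζ hζmem
      · exact BB_mono hζ.le (mem_BB_of_lt_psiB hδlt)
  exact fun x hx => (key hx).2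

/-- The least strongly critical ordinal strictly above `δ`. -/
noncomputable def gammaSucc (δ : Ordinal) : Ordinal :=
  sInf {γ | δ < γ ∧ StronglyCritical γ}

theorem stmt12 (θ ξ : Ordinal) (hξ : Order.IsSuccLimit ξ) :
    psiB θ ξ = sSup (psiB θ '' Set.Iio ξ) := by
  set s := sSup (psiB θ '' Set.Iio ξ) with hs
  have hne : (psiB θ '' Set.Iio ξ).Nonempty := ⟨psiB θ 0, 0, hξ.pos, rfl⟩
  have hbdd : BddAbove (psiB θ '' Set.Iio ξ) := by
    refine ⟨OmegaB θ, ?_⟩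
    rintro _ ⟨η, -, rfl⟩
    exact (psiB_lt_OmegaB θ η).le
  have hsΩ : s < OmegaB θ := by
    obtain ⟨β, hβΩ, hβ⟩ := exists_lt_OmegaB_not_mem_CC θ
    have hle : s ≤ β := by
      refine csSup_le hne ?_
      rintro _ ⟨η, -, rfl⟩
      rw [psiB_def]
      exact csInf_le' (fun h => hβ (BB_subset_CC θ η h))
    exact hle.trans_lt hβΩ
  have h1 : s ≤ psiB θ ξ := by
    refine csSup_le hne ?_
    rintro _ ⟨η, hη, rfl⟩
    exact psiB_mono hη.le
  have h2 : psiB θ ξ ≤ s := by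
    have hsnot : s ∉ BB θ ξ := by
      intro hmem
      obtain ⟨η, hη, hmem'⟩ := BB_limit_subset hξ hmem
      have hIic := BB_downward s hmem' hsΩ
      have hψ : psiB θ η ≤ s := le_csSup hbdd ⟨η, hη, rfl⟩
      exact psiB_not_mem θ η (hIic hψ)
    rw [psiB_def]
    exact csInf_le' hsnot
  exact le_antisymm h2 h1
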